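/- Let λ, μ, r₁, s₁, r₂, s₂ ∈ ℂ with c_{L,I} := λ - μ ≠ 0 and c_L := 2 - 12(λ² - μ²). Set h = Δ_{r₁,s₁}, h_I = r₁ - s₁, h' = Δ_{r₂,s₂}, h_I' = r₂ - s₂, where Δ_{r,s} = r²/2 - s²/2 - λr + μs. If h_I ≠ c_{L,I} and h_I' ≠ c_{L,I} and h_I + h_I' ≠ c_{L,I}, then Δ_{r₁+r₂, s₁+s₂} = (h_I' + h_I - c_{L,I})·(h'/(h_I' - c_{L,I}) + h/(h_I - c_{L,I})) - h_I·h_I'·(1/(h_I' - c_{L,I}) + 1/(h_I - c_{L,I}))·(c_L - 2)/(24 c_{L,I}). -/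
import Mathlib


/-- The conformal weight of the target Fock module of the intertwining operator:
with `c_{L,I} = λ - μ ≠ 0`, `c_L = 2 - 12(λ² - μ²)`, `h = Δ_{r₁,s₁}`, `h_I = r₁ - s₁`,
`h' = Δ_{r₂,s₂}`, `h_I' = r₂ - s₂`, and `h_I, h_I', h_I + h_I' ≠ c_{L,I}`, one has
`Δ_{r₁+r₂, s₁+s₂} = (h_I' + h_I - c_{L,I})(h'/(h_I' - c_{L,I}) + h/(h_I - c_{L,I}))
  - h_I h_I' (1/(h_I' - c_{L,I}) + 1/(h_I - c_{L,I})) (c_L - 2)/(24 c_{L,I})`. -/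
theorem fusion_conformal_weight (lam mu r1 s1 r2 s2 c cL h hI h' hI' : ℂ)
    (hc0 : lam - mu ≠ 0) (hc : c = lam - mu) (hcL : cL = 2 - 12 * (lam ^ 2 - mu ^ 2))
    (hh : h = r1 ^ 2 / 2 - s1 ^ 2 / 2 - lam * r1 + mu * s1) (hhI : hI = r1 - s1)
    (hh' : h' = r2 ^ 2 / 2 - s2 ^ 2 / 2 - lam * r2 + mu * s2) (hhI' : hI' = r2 - s2)
    (h1 : hI ≠ c) (h2 : hI' ≠ c) (h3 : hI + hI' ≠ c) :
    (r1 + r2) ^ 2 / 2 - (s1 + s2) ^ 2 / 2 - lam * (r1 + r2) + mu * (s1 + s2) =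
      (hI' + hI - c) * (h' / (hI' - c) + h / (hI - c)) -
        hI * hI' * (1 / (hI' - c) + 1 / (hI - c)) * ((cL - 2) / (24 * c)) := by
  subst hc hcL hh hhI hh' hhI'
  have e1 : r1 - s1 - (lam - mu) ≠ 0 := sub_ne_zero.mpr h1
  have e2 : r2 - s2 - (lam - mu) ≠ 0 := sub_ne_zero.mpr h2
  field_simp
  ring
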